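/- Fix an integer d ≥ 1, and let g_0, g_1, …, g_d be arbitrary real numbers (the f-vector f_{−1}, f_0, …, f_{d−1} of a (d−1)-dimensional relative Boolean cell complex C∖D). Define h_ℓ := ∑_{i=0}^{ℓ} (−1)^{ℓ−i} binom(d−i, ℓ−i) g_i for 0 ≤ ℓ ≤ d; define G_i := ∑_{m=0}^{d} g_m · Surj(m, i) for 0 ≤ i ≤ d, where Surj(m, i) is the number of surjective functions from an m-element set onto an i-element set (with Surj(0,0) = 1); and define H_k := ∑_{i=0}^{k} (−1)^{k−i} binom(d−i, k−i) G_i for 0 ≤ k ≤ d. Then ∑_{k=0}^{d} H_k x^k = ∑_{ℓ=0}^{d} h_ℓ · A_{d,ℓ}^{(1)}. (Lemma 5.3: h(sd(C)∖sd(D); x) = ∑_ℓ h_ℓ(C∖D) A_{d,ℓ}^{(1)}, since G_i is the number of (i−1)-faces of the barycentric subdivision.) -/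

import Mathlib

open Polynomial PowerSeries

/-- `A` is the `r`-colored `ℓ`-Eulerian polynomial `A_{d,ℓ}^{(r)}`, i.e. the polynomial
satisfying the formal power series identity
`A = (1 - x)^{d+1} * ∑_{t ≥ 0} (r t)^ℓ (r t + 1)^{d - ℓ} x^t`. -/
def IsColoredEulerian (d r ℓ : ℕ) (A : Polynomial ℝ) : Prop :=
  (A : PowerSeries ℝ) =
    (1 - PowerSeries.X) ^ (d + 1) *
      PowerSeries.mk fun t : ℕ => ((r : ℝ) * t) ^ ℓ * ((r : ℝ) * t + 1) ^ (d - ℓ)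

/-- `Surj m i` is the number of surjective functions from an `m`-element set onto an
`i`-element set (so `Surj 0 0 = 1`). -/
noncomputable def Surj (m i : ℕ) : ℕ :=
  Nat.card {f : Fin m → Fin i // Function.Surjective f}

namespace Aux

open Finset

lemma surj_eq_zero {m i : ℕ} (h : m < i) : Surj m i = 0 := by
  have : IsEmpty {f : Fin m → Fin i // Function.Surjective f} := by
    constructor
    rintro ⟨f, hf⟩
    have := Fintype.card_le_of_surjective f hf
    simp at this; omega
  exact Nat.card_of_isEmpty

noncomputable def surjEquiv (m t : ℕ) (S : Finset (Fin t)) :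
    {f : Fin m → Fin t // Finset.image f Finset.univ = S} ≃
      {g : Fin m → Fin S.card // Function.Surjective g} where
  toFun := fun ⟨f, hf⟩ => ⟨fun x => S.equivFin ⟨f x, by
      rw [← hf]; exact Finset.mem_image_of_mem f (Finset.mem_univ x)⟩, by
    intro y
    obtain ⟨s, hs⟩ : ∃ s : {x // x ∈ S}, S.equivFin s = y := ⟨S.equivFin.symm y, by simp⟩
    have : (s : Fin t) ∈ Finset.image f Finset.univ := hf ▸ s.2
    obtain ⟨x, -, hx⟩ := Finset.mem_image.1 this
    exact ⟨x, by rw [← hs]; apply congrArg; exact Subtype.ext hx⟩⟩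
  invFun := fun ⟨g, hg⟩ => ⟨fun x => (S.equivFin.symm (g x) : Fin t), by
    ext s
    simp only [Finset.mem_image, Finset.mem_univ, true_and]
    constructor
    · rintro ⟨x, rfl⟩; exact (S.equivFin.symm (g x)).2
    · intro hs
      obtain ⟨x, hx⟩ := hg (S.equivFin ⟨s, hs⟩)
      exact ⟨x, by rw [hx, Equiv.symm_apply_apply]⟩⟩
  left_inv := by rintro ⟨f, hf⟩; ext x; simp
  right_inv := by
    rintro ⟨g, hg⟩; ext x
    simp only
    rw [show (⟨((S.equivFin.symm (g x)) : Fin t), _⟩ : {a // a ∈ S}) = S.equivFin.symm (g x) from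
      Subtype.ext rfl, Equiv.apply_symm_apply]

lemma pow_eq_sum_surj (m t : ℕ) :
    t ^ m = ∑ i ∈ range (t + 1), t.choose i * Surj m i := by
  classical
  have h1 : t ^ m = Fintype.card (Fin m → Fin t) := by simp
  rw [h1, ← Finset.card_univ,
    Finset.card_eq_sum_card_fiberwise (f := fun f : Fin m → Fin t => Finset.image f Finset.univ)
      (t := (Finset.univ : Finset (Fin t)).powerset)
      (fun f _ => Finset.mem_powerset.2 (Finset.subset_univ _))]
  have hfiber : ∀ S : Finset (Fin t),
      #(filter (fun f : Fin m → Fin t => Finset.image f Finset.univ = S) univ) = Surj m S.card := by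
    intro S
    rw [← Fintype.card_subtype, Surj, Nat.card_eq_fintype_card]
    exact Fintype.card_congr (surjEquiv m t S)
  rw [Finset.sum_congr rfl (fun S _ => hfiber S)]
  rw [Finset.sum_powerset_apply_card]
  simp only [Finset.card_univ, Fintype.card_fin, smul_eq_mul]

lemma sum_surj_choose (d m t : ℕ) (hm : m ≤ d) :
    ∑ i ∈ range (d + 1), (Surj m i : ℝ) * t.choose i = (t : ℝ) ^ m := by
  have key : ∀ N, d ≤ N → t ≤ N →
      ∑ i ∈ range (N + 1), (Surj m i : ℝ) * t.choose i = (t : ℝ) ^ m := by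
    intro N hdN htN
    have h1 : ∑ i ∈ range (N + 1), (Surj m i : ℝ) * t.choose i
        = ∑ i ∈ range (t + 1), (Surj m i : ℝ) * t.choose i := by
      symm
      apply Finset.sum_subset (by intro x hx; simp at *; omega)
      intro x _ hx
      simp only [mem_range, not_lt] at hx
      rw [Nat.choose_eq_zero_of_lt (by omega)]
      simp
    rw [h1]
    rw [show ((t:ℝ)^m) = ((t^m : ℕ) : ℝ) by push_cast; ring, pow_eq_sum_surj m t]
    push_cast
    exact Finset.sum_congr rfl fun i _ => by ring
  have h2 := key (max d t) (le_max_left _ _) (le_max_right _ _)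
  rw [← h2]
  apply Finset.sum_subset (by intro x hx; simp at *; omega)
  intro x _ hx
  simp only [mem_range, not_lt] at hx
  rw [surj_eq_zero (by omega)]
  simp

lemma one_sub_X_pow_mul_mk_choose (i : ℕ) :
    (1 - PowerSeries.X : PowerSeries ℝ) ^ (i + 1) * PowerSeries.mk (fun t => (t.choose i : ℝ)) = PowerSeries.X ^ i := by
  induction i with
  | zero =>
    ext n
    cases n with
    | zero => simp [coeff_mk]
    | succ n =>
      rw [pow_one, sub_mul, one_mul, map_sub, coeff_succ_X_mul]
      simp [coeff_mk]
  | succ i ih =>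
    have step : (1 - PowerSeries.X : PowerSeries ℝ) * PowerSeries.mk (fun t => (t.choose (i+1) : ℝ))
        = PowerSeries.X * PowerSeries.mk (fun t => (t.choose i : ℝ)) := by
      ext n
      cases n with
      | zero => simp [coeff_mk, coeff_zero_eq_constantCoeff]
      | succ n =>
        rw [sub_mul, one_mul, map_sub, coeff_succ_X_mul, coeff_succ_X_mul]
        simp only [coeff_mk, Nat.choose_succ_succ]
        push_cast; ring
    calc (1 - PowerSeries.X : PowerSeries ℝ) ^ (i + 2) * PowerSeries.mk (fun t => (t.choose (i+1) : ℝ))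
        = (1 - PowerSeries.X) ^ (i+1) * ((1 - PowerSeries.X) * PowerSeries.mk (fun t => (t.choose (i+1) : ℝ))) := by ring
      _ = (1 - PowerSeries.X) ^ (i+1) * (PowerSeries.X * PowerSeries.mk (fun t => (t.choose i : ℝ))) := by rw [step]
      _ = PowerSeries.X * ((1 - PowerSeries.X) ^ (i+1) * PowerSeries.mk (fun t => (t.choose i : ℝ))) := by ring
      _ = PowerSeries.X ^ (i+1) := by rw [ih]; ring

lemma xpow_eq (d i : ℕ) (hi : i ≤ d) :
    (PowerSeries.X : PowerSeries ℝ) ^ i * (1 - PowerSeries.X) ^ (d - i)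
      = (1 - PowerSeries.X) ^ (d + 1) * PowerSeries.mk (fun t => (t.choose i : ℝ)) := by
  rw [show d + 1 = (d - i) + (i + 1) from by omega, pow_add, mul_assoc,
    one_sub_X_pow_mul_mk_choose]
  ring

lemma tri_swap {M : Type*} [AddCommMonoid M] (n : ℕ) (F : ℕ → ℕ → M) :
    ∑ k ∈ range (n + 1), ∑ i ∈ range (k + 1), F i k
      = ∑ i ∈ range (n + 1), ∑ k ∈ Ico i (n + 1), F i k := by
  simp_rw [Finset.range_eq_Ico]
  exact (Finset.sum_Ico_Ico_comm 0 (n + 1) F).symm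

lemma sum_C_mul_mk (s : Finset ℕ) (c : ℕ → ℝ) (f : ℕ → ℕ → ℝ) :
    ∑ k ∈ s, PowerSeries.C (c k) * PowerSeries.mk (f k)
      = PowerSeries.mk (fun t => ∑ k ∈ s, c k * f k t) := by
  ext n
  rw [map_sum]
  simp [coeff_mk]

lemma ps_binom (d i : ℕ) (hi : i ≤ d) (c : ℝ) :
    ∑ k ∈ Ico i (d + 1),
        PowerSeries.C ((-1 : ℝ) ^ (k - i) * ((d - i).choose (k - i)) * c) * PowerSeries.X ^ k
      = PowerSeries.C c * (PowerSeries.X ^ i * (1 - PowerSeries.X) ^ (d - i)) := by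
  rw [Finset.sum_Ico_eq_sum_range, show d + 1 - i = (d - i) + 1 from by omega,
    sub_eq_add_neg, add_comm (1 : PowerSeries ℝ), add_pow, Finset.mul_sum, Finset.mul_sum]
  refine Finset.sum_congr rfl fun j hj => ?_
  rw [show i + j - i = j from by omega]
  simp only [map_mul, map_pow, map_neg, map_one, map_natCast, one_pow]
  rw [pow_add]
  ring

lemma real_binom (d i : ℕ) (hi : i ≤ d) (c x : ℝ) :
    ∑ ℓ ∈ Ico i (d + 1),
        (-1 : ℝ) ^ (ℓ - i) * ((d - i).choose (ℓ - i)) * c * (x ^ ℓ * (x + 1) ^ (d - ℓ))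
      = c * x ^ i := by
  rw [Finset.sum_Ico_eq_sum_range, show d + 1 - i = (d - i) + 1 from by omega]
  have h1 : c * x ^ i = c * x ^ i * ((-x) + (x + 1)) ^ (d - i) := by
    have : (-x) + (x + 1) = 1 := by ring
    rw [this, one_pow, mul_one]
  rw [h1, add_pow, Finset.mul_sum]
  refine Finset.sum_congr rfl fun j hj => ?_
  rw [show i + j - i = j from by omega, show d - (i + j) = (d - i) - j from by omega, pow_add]
  ring

end Aux


open Finset Aux in
/-- Lemma 5.3: let `g_0, …, g_d` be arbitrary reals (the `f`-vector of a
`(d-1)`-dimensional relative Boolean cell complex), let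
`h_ℓ = ∑_{i=0}^ℓ (-1)^{ℓ-i} C(d-i, ℓ-i) g_i`, let `G_i = ∑_{m=0}^d g_m Surj(m, i)`
(the `f`-vector of the barycentric subdivision), and let
`H_k = ∑_{i=0}^k (-1)^{k-i} C(d-i, k-i) G_i`.  Then
`∑_{k=0}^d H_k x^k = ∑_{ℓ=0}^d h_ℓ A_{d,ℓ}^{(1)}`. -/
theorem h_poly_barycentric_relative (d : ℕ) (hd : 1 ≤ d) (g : ℕ → ℝ)
    (A : ℕ → Polynomial ℝ) (hA : ∀ ℓ ≤ d, IsColoredEulerian d 1 ℓ (A ℓ)) :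
    (∑ k ∈ Finset.range (d + 1),
        Polynomial.C
          (∑ i ∈ Finset.range (k + 1),
            (-1 : ℝ) ^ (k - i) * (Nat.choose (d - i) (k - i)) *
              (∑ m ∈ Finset.range (d + 1), g m * Surj m i)) *
          Polynomial.X ^ k) =
      ∑ ℓ ∈ Finset.range (d + 1),
        Polynomial.C
          (∑ i ∈ Finset.range (ℓ + 1),
            (-1 : ℝ) ^ (ℓ - i) * (Nat.choose (d - i) (ℓ - i)) * g i) *
          A ℓ := by
  rw [← Polynomial.coe_inj, ← Polynomial.coeToPowerSeries.ringHom_apply,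
    ← Polynomial.coeToPowerSeries.ringHom_apply, map_sum, map_sum]
  simp only [Polynomial.coeToPowerSeries.ringHom_apply, Polynomial.coe_mul, Polynomial.coe_pow,
    Polynomial.coe_C, Polynomial.coe_X]
  set G : ℕ → ℝ := fun i => ∑ m ∈ Finset.range (d + 1), g m * Surj m i with hG
  have hLHS :
      ∑ k ∈ Finset.range (d + 1),
          PowerSeries.C (∑ i ∈ Finset.range (k + 1),
              (-1 : ℝ) ^ (k - i) * ((d - i).choose (k - i)) * G i) * PowerSeries.X ^ k
        = (1 - PowerSeries.X) ^ (d + 1) *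
            PowerSeries.mk (fun t => ∑ m ∈ Finset.range (d + 1), g m * (t : ℝ) ^ m) := by
    calc
      ∑ k ∈ Finset.range (d + 1),
          PowerSeries.C (∑ i ∈ Finset.range (k + 1),
              (-1 : ℝ) ^ (k - i) * ((d - i).choose (k - i)) * G i) * PowerSeries.X ^ k
        = ∑ k ∈ Finset.range (d + 1), ∑ i ∈ Finset.range (k + 1),
            PowerSeries.C ((-1 : ℝ) ^ (k - i) * ((d - i).choose (k - i)) * G i) * PowerSeries.X ^ k := by
          refine Finset.sum_congr rfl fun k _ => ?_
          rw [map_sum, Finset.sum_mul]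
      _ = ∑ i ∈ Finset.range (d + 1), ∑ k ∈ Finset.Ico i (d + 1),
            PowerSeries.C ((-1 : ℝ) ^ (k - i) * ((d - i).choose (k - i)) * G i) * PowerSeries.X ^ k :=
          tri_swap d _
      _ = ∑ i ∈ Finset.range (d + 1),
            PowerSeries.C (G i) * (PowerSeries.X ^ i * (1 - PowerSeries.X) ^ (d - i)) := by
          refine Finset.sum_congr rfl fun i hi => ?_
          exact ps_binom d i (by simp at hi; omega) (G i)
      _ = ∑ i ∈ Finset.range (d + 1),
            (1 - PowerSeries.X) ^ (d + 1) *
              (PowerSeries.C (G i) * PowerSeries.mk (fun t => (t.choose i : ℝ))) := by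
          refine Finset.sum_congr rfl fun i hi => ?_
          rw [xpow_eq d i (by simp at hi; omega)]
          ring
      _ = (1 - PowerSeries.X) ^ (d + 1) *
            PowerSeries.mk (fun t => ∑ i ∈ Finset.range (d + 1), G i * (t.choose i : ℝ)) := by
          rw [← Finset.mul_sum, sum_C_mul_mk]
      _ = (1 - PowerSeries.X) ^ (d + 1) *
            PowerSeries.mk (fun t => ∑ m ∈ Finset.range (d + 1), g m * (t : ℝ) ^ m) := by
          congr 1
          ext t
          rw [coeff_mk, coeff_mk]
          calc
            ∑ i ∈ Finset.range (d + 1), G i * (t.choose i : ℝ)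
              = ∑ i ∈ Finset.range (d + 1), ∑ m ∈ Finset.range (d + 1),
                  g m * ((Surj m i : ℝ) * (t.choose i : ℝ)) := by
                refine Finset.sum_congr rfl fun i _ => ?_
                rw [hG, Finset.sum_mul]
                exact Finset.sum_congr rfl fun m _ => by ring
            _ = ∑ m ∈ Finset.range (d + 1), ∑ i ∈ Finset.range (d + 1),
                  g m * ((Surj m i : ℝ) * (t.choose i : ℝ)) := Finset.sum_comm
            _ = ∑ m ∈ Finset.range (d + 1), g m * (t : ℝ) ^ m := by
                refine Finset.sum_congr rfl fun m hm => ?_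
                rw [← Finset.mul_sum, sum_surj_choose d m t (by simp at hm; omega)]
  rw [hLHS]
  have hRHS :
      ∑ ℓ ∈ Finset.range (d + 1),
          PowerSeries.C (∑ i ∈ Finset.range (ℓ + 1),
              (-1 : ℝ) ^ (ℓ - i) * ((d - i).choose (ℓ - i)) * g i) * (A ℓ : PowerSeries ℝ)
        = (1 - PowerSeries.X) ^ (d + 1) *
            PowerSeries.mk (fun t => ∑ m ∈ Finset.range (d + 1), g m * (t : ℝ) ^ m) := by
    calc
      ∑ ℓ ∈ Finset.range (d + 1),
          PowerSeries.C (∑ i ∈ Finset.range (ℓ + 1),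
              (-1 : ℝ) ^ (ℓ - i) * ((d - i).choose (ℓ - i)) * g i) * (A ℓ : PowerSeries ℝ)
        = ∑ ℓ ∈ Finset.range (d + 1),
            (1 - PowerSeries.X) ^ (d + 1) *
              (PowerSeries.C (∑ i ∈ Finset.range (ℓ + 1),
                  (-1 : ℝ) ^ (ℓ - i) * ((d - i).choose (ℓ - i)) * g i) *
                PowerSeries.mk (fun t : ℕ => ((t : ℝ)) ^ ℓ * ((t : ℝ) + 1) ^ (d - ℓ))) := by
          refine Finset.sum_congr rfl fun ℓ hℓ => ?_
          have h := hA ℓ (by simp at hℓ; omega)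
          rw [IsColoredEulerian] at h
          simp only [Nat.cast_one, one_mul] at h
          rw [h]
          ring
      _ = (1 - PowerSeries.X) ^ (d + 1) *
            PowerSeries.mk (fun t => ∑ ℓ ∈ Finset.range (d + 1),
              (∑ i ∈ Finset.range (ℓ + 1),
                  (-1 : ℝ) ^ (ℓ - i) * ((d - i).choose (ℓ - i)) * g i) *
                ((t : ℝ) ^ ℓ * ((t : ℝ) + 1) ^ (d - ℓ))) := by
          rw [← Finset.mul_sum, sum_C_mul_mk]
      _ = (1 - PowerSeries.X) ^ (d + 1) *
            PowerSeries.mk (fun t => ∑ m ∈ Finset.range (d + 1), g m * (t : ℝ) ^ m) := by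
          congr 1
          ext t
          rw [coeff_mk, coeff_mk]
          calc
            ∑ ℓ ∈ Finset.range (d + 1),
                (∑ i ∈ Finset.range (ℓ + 1),
                    (-1 : ℝ) ^ (ℓ - i) * ((d - i).choose (ℓ - i)) * g i) *
                  ((t : ℝ) ^ ℓ * ((t : ℝ) + 1) ^ (d - ℓ))
              = ∑ ℓ ∈ Finset.range (d + 1), ∑ i ∈ Finset.range (ℓ + 1),
                  (-1 : ℝ) ^ (ℓ - i) * ((d - i).choose (ℓ - i)) * g i *
                    ((t : ℝ) ^ ℓ * ((t : ℝ) + 1) ^ (d - ℓ)) := by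
                refine Finset.sum_congr rfl fun ℓ _ => Finset.sum_mul _ _ _
            _ = ∑ i ∈ Finset.range (d + 1), ∑ ℓ ∈ Finset.Ico i (d + 1),
                  (-1 : ℝ) ^ (ℓ - i) * ((d - i).choose (ℓ - i)) * g i *
                    ((t : ℝ) ^ ℓ * ((t : ℝ) + 1) ^ (d - ℓ)) := tri_swap d _
            _ = ∑ i ∈ Finset.range (d + 1), g i * (t : ℝ) ^ i := by
                refine Finset.sum_congr rfl fun i hi => ?_
                exact real_binom d i (by simp at hi; omega) (g i) (t : ℝ)
  rw [hRHS]
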